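/- Let (X,d) be a complete CAT(0) space and A ⊆ X a closed and convex subset. If A contains a directional sequence, then A contains a geodesic ray. -/

import Mathlib

open Set Filter Metric

section Defs

variable {X : Type*} [MetricSpace X]

/-- A unit-speed geodesic defined on `[a, b]`. -/
def IsGeodesicOn (γ : ℝ → X) (a b : ℝ) : Prop :=
  ∀ s ∈ Set.Icc a b, ∀ t ∈ Set.Icc a b, dist (γ s) (γ t) = |s - t|

/-- `S` is a geodesic segment joining `x` and `y`. -/
def IsGeodesicSegment (S : Set X) (x y : X) : Prop :=
  ∃ (a b : ℝ) (γ : ℝ → X), a ≤ b ∧ IsGeodesicOn γ a b ∧ γ a = x ∧ γ b = y ∧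
    S = γ '' Set.Icc a b

/-- A geodesic space: every two points are joined by a geodesic segment. -/
def GeodesicSpace (X : Type*) [MetricSpace X] : Prop :=
  ∀ x y : X, ∃ S : Set X, IsGeodesicSegment S x y

/-- A uniquely geodesic space. -/
def UniquelyGeodesic (X : Type*) [MetricSpace X] : Prop :=
  ∀ x y : X, ∃! S : Set X, IsGeodesicSegment S x y

/-- `S` is contained in the closed `M`-neighborhood of `T`. -/
def InClosedNbhd (S T : Set X) (M : ℝ) : Prop :=
  ∀ p ∈ S, ∃ q ∈ T, dist p q ≤ M

/-- A triangle with sides `S1, S2, S3` is `M`-slim. -/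
def SlimTriangle (S1 S2 S3 : Set X) (M : ℝ) : Prop :=
  InClosedNbhd S1 (S2 ∪ S3) M ∧ InClosedNbhd S2 (S1 ∪ S3) M ∧ InClosedNbhd S3 (S1 ∪ S2) M

/-- `X` is `δ`-hyperbolic: every geodesic triangle is `δ`-slim. -/
def DeltaHyperbolic (X : Type*) [MetricSpace X] (δ : ℝ) : Prop :=
  ∀ x y z : X, ∀ S1 S2 S3 : Set X,
    IsGeodesicSegment S1 x y → IsGeodesicSegment S2 y z → IsGeodesicSegment S3 z x →
    SlimTriangle S1 S2 S3 δ

/-- A geodesic ray `γ : [0, ∞) → X`. -/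
def IsGeodesicRay (γ : ℝ → X) : Prop :=
  ∀ s ∈ Set.Ici (0:ℝ), ∀ t ∈ Set.Ici (0:ℝ), dist (γ s) (γ t) = |s - t|

/-- A set is geodesically bounded if it contains no geodesic ray. -/
def GeodesicallyBounded (A : Set X) : Prop :=
  ¬ ∃ γ : ℝ → X, IsGeodesicRay γ ∧ ∀ t ∈ Set.Ici (0:ℝ), γ t ∈ A

/-- A directional curve `γ : [0, ∞) → X` (with some constant `b ≥ 0`). -/
def IsDirectionalCurve (γ : ℝ → X) : Prop :=
  ∃ b : ℝ, 0 ≤ b ∧ ∀ s ∈ Set.Ici (0:ℝ), ∀ t ∈ Set.Ici (0:ℝ),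
    |s - t| - b ≤ dist (γ s) (γ t) ∧ dist (γ s) (γ t) ≤ |s - t|

/-- A set is directionally bounded if it contains no directional curve. -/
def DirectionallyBounded (A : Set X) : Prop :=
  ¬ ∃ γ : ℝ → X, IsDirectionalCurve γ ∧ ∀ t ∈ Set.Ici (0:ℝ), γ t ∈ A

/-- A subset of a geodesic space is convex if every geodesic segment joining two of its
points is contained in it. -/
def GeodesicConvex (A : Set X) : Prop :=
  ∀ x ∈ A, ∀ y ∈ A, ∀ S : Set X, IsGeodesicSegment S x y → S ⊆ A

/-- The comparison point in the Euclidean plane: the point on the segment from `x'` to `y'`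
(of length `L`) at distance `t` from `x'`. -/
noncomputable def cmpPt (x' y' : EuclideanSpace ℝ (Fin 2)) (L t : ℝ) :
    EuclideanSpace ℝ (Fin 2) :=
  AffineMap.lineMap x' y' (t / L)

/-- `X` is a CAT(0) space: it is geodesic and for every geodesic triangle and every
comparison triangle in the Euclidean plane, distances between points on the triangle are
bounded by the distances between the corresponding comparison points. -/
def CAT0Space (X : Type*) [MetricSpace X] : Prop :=
  GeodesicSpace X ∧
  ∀ (x y z : X) (γ1 γ2 γ3 : ℝ → X),
    IsGeodesicOn γ1 0 (dist x y) → γ1 0 = x → γ1 (dist x y) = y →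
    IsGeodesicOn γ2 0 (dist y z) → γ2 0 = y → γ2 (dist y z) = z →
    IsGeodesicOn γ3 0 (dist z x) → γ3 0 = z → γ3 (dist z x) = x →
    ∀ x' y' z' : EuclideanSpace ℝ (Fin 2),
      dist x' y' = dist x y → dist y' z' = dist y z → dist z' x' = dist z x →
      (∀ s ∈ Set.Icc (0:ℝ) (dist x y), ∀ t ∈ Set.Icc (0:ℝ) (dist y z),
        dist (γ1 s) (γ2 t) ≤ dist (cmpPt x' y' (dist x y) s) (cmpPt y' z' (dist y z) t)) ∧
      (∀ s ∈ Set.Icc (0:ℝ) (dist y z), ∀ t ∈ Set.Icc (0:ℝ) (dist z x),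
        dist (γ2 s) (γ3 t) ≤ dist (cmpPt y' z' (dist y z) s) (cmpPt z' x' (dist z x) t)) ∧
      (∀ s ∈ Set.Icc (0:ℝ) (dist z x), ∀ t ∈ Set.Icc (0:ℝ) (dist x y),
        dist (γ3 s) (γ1 t) ≤ dist (cmpPt z' x' (dist z x) s) (cmpPt x' y' (dist x y) t))

/-- Busemann convexity. -/
def BusemannConvex (X : Type*) [MetricSpace X] : Prop :=
  GeodesicSpace X ∧
  ∀ (a b c d : ℝ) (γ σ : ℝ → X), a ≤ b → c ≤ d →
    IsGeodesicOn γ a b → IsGeodesicOn σ c d →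
    ∀ t ∈ Set.Icc (0:ℝ) 1,
      dist (γ ((1-t)*a + t*b)) (σ ((1-t)*c + t*d)) ≤
        (1-t) * dist (γ a) (σ c) + t * dist (γ b) (σ d)

/-- A `(lam, eps)`-quasi-geodesic defined on `[a, b]`. -/
def IsQuasiGeodesicOn (lam eps : ℝ) (γ : ℝ → X) (a b : ℝ) : Prop :=
  ∀ s ∈ Set.Icc a b, ∀ t ∈ Set.Icc a b,
    (1/lam) * |s - t| - eps ≤ dist (γ s) (γ t) ∧ dist (γ s) (γ t) ≤ lam * |s - t| + eps

/-- A `(lam, eps)`-quasi-geodesic ray. -/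
def IsQuasiGeodesicRay (lam eps : ℝ) (γ : ℝ → X) : Prop :=
  ∀ s ∈ Set.Ici (0:ℝ), ∀ t ∈ Set.Ici (0:ℝ),
    (1/lam) * |s - t| - eps ≤ dist (γ s) (γ t) ∧ dist (γ s) (γ t) ≤ lam * |s - t| + eps

/-- A `k`-local `lam`-quasi-geodesic ray: a `(lam, eps)`-quasi-geodesic ray locally,
for every `eps > 0`. -/
def IsLocalQuasiGeodesicRay (k lam : ℝ) (γ : ℝ → X) : Prop :=
  ∀ eps > (0:ℝ), ∀ s ∈ Set.Ici (0:ℝ), ∀ t ∈ Set.Ici (0:ℝ), |s - t| ≤ k →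
    (1/lam) * |s - t| - eps ≤ dist (γ s) (γ t) ∧ dist (γ s) (γ t) ≤ lam * |s - t| + eps

/-- `S` is the image of a `lam`-quasi-geodesic joining `x` and `y`
(i.e. a `(lam, eps)`-quasi-geodesic for every `eps > 0`). -/
def IsQuasiGeodesicSegment (lam : ℝ) (S : Set X) (x y : X) : Prop :=
  ∃ (a b : ℝ) (γ : ℝ → X), a ≤ b ∧ (∀ eps > (0:ℝ), IsQuasiGeodesicOn lam eps γ a b) ∧
    γ a = x ∧ γ b = y ∧ S = γ '' Set.Icc a b

/-- Every `lam`-quasi-geodesic triangle in `X` is `M`-slim. -/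
def QuasiGeodesicTrianglesSlim (X : Type*) [MetricSpace X] (lam M : ℝ) : Prop :=
  ∀ x y z : X, ∀ S1 S2 S3 : Set X,
    IsQuasiGeodesicSegment lam S1 x y → IsQuasiGeodesicSegment lam S2 y z →
    IsQuasiGeodesicSegment lam S3 z x → SlimTriangle S1 S2 S3 M

/-- A play of the Lion-Man game in `A` with speed `D`. -/
def IsLionManPlay (A : Set X) (D : ℝ) (L M : ℕ → X) : Prop :=
  (∀ n, L n ∈ A) ∧ (∀ n, M n ∈ A) ∧
  (∀ n, ∃ S : Set X, IsGeodesicSegment S (L n) (M n) ∧ L (n+1) ∈ S) ∧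
  (∀ n, dist (L n) (L (n+1)) = min D (dist (L n) (M n))) ∧
  (∀ n, dist (M n) (M (n+1)) ≤ D)

/-- The lion wins a play if `d(L_{n+1}, M_n) → 0`. -/
def LionWins (L M : ℕ → X) : Prop :=
  Filter.Tendsto (fun n => dist (L (n+1)) (M n)) Filter.atTop (nhds 0)

/-- The lion always wins the Lion-Man game played in `A`. -/
def LionAlwaysWins (A : Set X) : Prop :=
  ∀ D > (0:ℝ), ∀ L M : ℕ → X, IsLionManPlay A D L M → LionWins L M

end Defs

/-- A directional sequence: `d(x₀, x_n) → ∞` and there is `b ≥ 0` such that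
`d(x_{n₁}, x_{n_l}) ≥ ∑_{i=1}^{l-1} d(x_{n_i}, x_{n_{i+1}}) - b` for all
increasing finite families of indices `n₁ < n₂ < ⋯ < n_l`. -/
def IsDirectionalSeq {X : Type*} [MetricSpace X] (x : ℕ → X) : Prop :=
  Filter.Tendsto (fun n => dist (x 0) (x n)) Filter.atTop Filter.atTop ∧
  ∃ b : ℝ, 0 ≤ b ∧ ∀ (l : ℕ) (n : Fin (l + 1) → ℕ), StrictMono n →
    dist (x (n 0)) (x (n (Fin.last l))) ≥
      (∑ i : Fin l, dist (x (n i.castSucc)) (x (n i.succ))) - b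

section AuxLemmas
variable {X : Type*} [MetricSpace X]

lemma exists_normal_geodesic (hX : GeodesicSpace X) {A : Set X} (hconv : GeodesicConvex A)
    {x y : X} (hx : x ∈ A) (hy : y ∈ A) :
    ∃ g : ℝ → X, IsGeodesicOn g 0 (dist x y) ∧ g 0 = x ∧ g (dist x y) = y ∧
      ∀ s ∈ Set.Icc (0:ℝ) (dist x y), g s ∈ A := by
  obtain ⟨S, a, c, γ, hac, hgeo, hga, hgc, hS⟩ := hX x y
  have hd : dist x y = c - a := by
    have h := hgeo a ⟨le_refl a, hac⟩ c ⟨hac, le_refl c⟩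
    rw [hga, hgc] at h
    rw [h, abs_of_nonpos (by linarith)]; ring
  have hac' : a + (c - a) = c := by ring
  refine ⟨fun s => γ (a + s), ?_, by simpa using hga, by show γ (a + dist x y) = y; rw [hd, hac', hgc], ?_⟩
  · intro s hs t ht
    rw [hd] at hs ht
    have h := hgeo (a+s) ⟨by linarith [hs.1], by linarith [hs.2]⟩ (a+t)
      ⟨by linarith [ht.1], by linarith [ht.2]⟩
    simpa using h
  · intro s hs
    rw [hd] at hs
    have hmem : γ (a + s) ∈ S := by
      rw [hS]; exact ⟨a + s, ⟨by linarith [hs.1], by linarith [hs.2]⟩, rfl⟩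
    exact hconv x hx y hy S ⟨a, c, γ, hac, hgeo, hga, hgc, hS⟩ hmem

lemma exists_cmp_triangle (p q r : ℝ) (hp : 0 < p) (hq : 0 ≤ q) (hr : 0 ≤ r)
    (h1 : r ≤ p + q) (h2 : q ≤ p + r) (h3 : p ≤ q + r) :
    ∃ a b c : EuclideanSpace ℝ (Fin 2), dist a b = p ∧ dist b c = q ∧ dist c a = r := by
  set u := (p^2 + r^2 - q^2) / (2*p) with hu
  have hru : u^2 ≤ r^2 := by
    rw [hu, div_pow, div_le_iff₀ (by positivity)]
    nlinarith [mul_nonneg (mul_nonneg (mul_nonneg (by linarith : (0:ℝ) ≤ p+r-q)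
      (by linarith : (0:ℝ) ≤ p+r+q)) (by linarith : (0:ℝ) ≤ q-p+r))
      (by linarith : (0:ℝ) ≤ q+p-r)]
  set v := Real.sqrt (r^2 - u^2) with hv
  have hv2 : v^2 = r^2 - u^2 := Real.sq_sqrt (by linarith)
  have h2pu : 2*p*u = p^2 + r^2 - q^2 := by rw [hu]; field_simp
  refine ⟨!₂[0,0], !₂[p,0], !₂[u,v], ?_, ?_, ?_⟩ <;>
      rw [EuclideanSpace.dist_eq, Fin.sum_univ_two] <;>
      simp only [PiLp.toLp_apply, Matrix.cons_val_zero, Matrix.cons_val_one, Matrix.head_cons, Real.dist_eq]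
  · rw [show |(0:ℝ) - p|^2 + |(0:ℝ)-0|^2 = p^2 by rw [sq_abs, sq_abs]; ring]
    exact Real.sqrt_sq hp.le
  · rw [show |p - u|^2 + |0 - v|^2 = q^2 by rw [sq_abs, sq_abs]; nlinarith [hv2]]
    exact Real.sqrt_sq hq
  · rw [show |u - 0|^2 + |v - 0|^2 = r^2 by rw [sq_abs, sq_abs]; nlinarith [hv2]]
    exact Real.sqrt_sq hr

lemma cmpPt_dist_sq (a b c : EuclideanSpace ℝ (Fin 2)) {p q r : ℝ} (t : ℝ)
    (hp : 0 < p) (hr : 0 < r) (hab : dist a b = p) (hbc : dist b c = q) (hca : dist c a = r) :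
    dist (cmpPt c a r (r - t)) (cmpPt a b p t) ^ 2 = t^2 * (q^2 - (p - r)^2) / (p * r) := by
  have hu : ‖c - a‖ = r := by rw [← dist_eq_norm]; exact hca
  have hw : ‖b - a‖ = p := by rw [← dist_eq_norm, dist_comm]; exact hab
  have hip : inner ℝ (c - a) (b - a) = (r^2 + p^2 - q^2)/2 := by
    have h := norm_sub_sq_real (c - a) (b - a)
    have h2 : ‖(c - a) - (b - a)‖ = q := by
      rw [sub_sub_sub_cancel_right, ← dist_eq_norm, dist_comm]; exact hbc
    rw [h2, hu, hw] at h
    linarith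
  have key : cmpPt c a r (r - t) - cmpPt a b p t = (t/r) • (c - a) - (t/p) • (b - a) := by
    simp only [cmpPt, AffineMap.lineMap_apply_module]
    have e1 : (r - t)/r = 1 - t/r := by field_simp
    rw [e1]
    module
  rw [dist_eq_norm, key, norm_sub_sq_real, norm_smul, norm_smul,
    real_inner_smul_left, real_inner_smul_right, hip, mul_pow, mul_pow,
    Real.norm_eq_abs, Real.norm_eq_abs, sq_abs, sq_abs, hu, hw]
  field_simp
  ring

end AuxLemmas

lemma key_estimate {X : Type*} [MetricSpace X] (hX : CAT0Space X) {b : ℝ} (hb : 0 ≤ b)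
    {x y z : X} {g1 g2 g3 : ℝ → X}
    (h1 : IsGeodesicOn g1 0 (dist x y)) (h1a : g1 0 = x) (h1b : g1 (dist x y) = y)
    (h2 : IsGeodesicOn g2 0 (dist y z)) (h2a : g2 0 = y) (h2b : g2 (dist y z) = z)
    (h3 : IsGeodesicOn g3 0 (dist x z)) (h3a : g3 0 = x) (h3b : g3 (dist x z) = z)
    (hchain : dist x y + dist y z - b ≤ dist x z)
    {t : ℝ} (ht0 : 0 ≤ t) (htp : t ≤ dist x y) (htr : t ≤ dist x z) :
    dist (g1 t) (g3 t) ≤ Real.sqrt (2 * t^2 * b / dist x y) := by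
  rcases eq_or_lt_of_le ht0 with h0 | h0
  · rw [← h0]
    simpa [h1a, h3a] using Real.sqrt_nonneg (2 * t^2 * b / dist x y)
  have hp : 0 < dist x y := lt_of_lt_of_le h0 htp
  have hr : 0 < dist x z := lt_of_lt_of_le h0 htr
  have hq : (0:ℝ) ≤ dist y z := dist_nonneg
  have htri1 : dist x z ≤ dist x y + dist y z := dist_triangle x y z
  have htri2 : dist y z ≤ dist x y + dist x z := by
    have h := dist_triangle y x z; rw [dist_comm y x] at h; exact h
  have htri3 : dist x y ≤ dist y z + dist x z := by
    have h := dist_triangle x z y; rw [dist_comm z y] at h; linarith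
  obtain ⟨a', b', c', hab, hbc, hca⟩ := exists_cmp_triangle (dist x y) (dist y z) (dist x z)
    hp hq hr.le htri1 htri2 htri3
  set p := dist x y with hpd
  set q := dist y z with hqd
  set r := dist x z with hrd
  have hrzx : dist z x = r := dist_comm z x
  set G3 : ℝ → X := fun s => g3 (r - s) with hG3def
  have hG3 : IsGeodesicOn G3 0 (dist z x) := by
    rw [hrzx]
    intro s hs u hu
    have h := h3 (r - s) ⟨by linarith [hs.2], by linarith [hs.1]⟩ (r - u)
      ⟨by linarith [hu.2], by linarith [hu.1]⟩
    rw [show G3 s = g3 (r - s) from rfl, show G3 u = g3 (r - u) from rfl, h,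
      show r - s - (r - u) = -(s - u) by ring, abs_neg]
  have hG3a : G3 0 = z := by show g3 (r - 0) = z; rw [sub_zero, hrd, h3b]
  have hG3b : G3 (dist z x) = x := by
    show g3 (r - dist z x) = x; rw [hrzx, sub_self, h3a]
  have hca' : dist c' a' = dist z x := by rw [hrzx]; exact hca
  have hcmp := (hX.2 x y z g1 g2 G3 h1 h1a h1b h2 h2a h2b hG3 hG3a hG3b a' b' c'
    hab hbc hca').2.2
  rw [hrzx] at hcmp
  have hle := hcmp (r - t) ⟨by linarith, by linarith⟩ t ⟨ht0, htp⟩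
  have hGt : G3 (r - t) = g3 t := by show g3 (r - (r - t)) = g3 t; rw [sub_sub_cancel]
  rw [hGt] at hle
  have hsq := cmpPt_dist_sq a' b' c' t hp hr hab hbc hca
  have hkeymul : (q + p - r) * (q - p + r) ≤ b * (2 * r) := by
    have hA : q + p - r ≤ b := by linarith
    have hB : (0:ℝ) ≤ q - p + r := by linarith
    have hC : q - p + r ≤ 2 * r := by linarith
    have hD : (0:ℝ) ≤ q + p - r := by linarith
    calc (q + p - r) * (q - p + r) ≤ b * (q - p + r) := by
          exact mul_le_mul_of_nonneg_right hA hB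
      _ ≤ b * (2 * r) := by exact mul_le_mul_of_nonneg_left hC hb
  have hbound : dist (cmpPt c' a' r (r - t)) (cmpPt a' b' p t) ^ 2 ≤ 2 * t^2 * b / p := by
    rw [hsq, div_le_div_iff₀ (by positivity) (by positivity)]
    have h5 : t^2 * ((q + p - r)*(q - p + r)) ≤ t^2 * (b * (2*r)) :=
      mul_le_mul_of_nonneg_left hkeymul (sq_nonneg t)
    nlinarith [h5, hp.le]
  have hfin : dist (cmpPt c' a' r (r - t)) (cmpPt a' b' p t) ≤
      Real.sqrt (2 * t^2 * b / p) :=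
    (Real.le_sqrt dist_nonneg (by positivity)).mpr hbound
  calc dist (g1 t) (g3 t) = dist (g3 t) (g1 t) := dist_comm _ _
    _ ≤ _ := hle
    _ ≤ _ := hfin


/-- If a closed convex subset of a complete CAT(0) space contains a directional sequence,
then it contains a geodesic ray. -/
theorem stmt2 {X : Type*} [MetricSpace X] [CompleteSpace X] (hX : CAT0Space X)
    (A : Set X) (hclosed : IsClosed A) (hconv : GeodesicConvex A)
    (x : ℕ → X) (hxA : ∀ n, x n ∈ A) (hdir : IsDirectionalSeq x) :
    ∃ γ : ℝ → X, IsGeodesicRay γ ∧ ∀ t ∈ Set.Ici (0:ℝ), γ t ∈ A := by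
  obtain ⟨htend, b, hb, hchain⟩ := hdir
  haveI : Nonempty X := ⟨x 0⟩
  set d : ℕ → ℝ := fun n => dist (x 0) (x n) with hd
  -- normalized geodesics from x 0 to x n inside A
  have hgex : ∀ n : ℕ, ∃ g : ℝ → X, IsGeodesicOn g 0 (d n) ∧ g 0 = x 0 ∧ g (d n) = x n ∧
      ∀ s ∈ Set.Icc (0:ℝ) (d n), g s ∈ A :=
    fun n => exists_normal_geodesic hX.1 hconv (hxA 0) (hxA n)
  choose g hgeo hg0 hg1 hgA using hgex
  -- the chain inequality
  have hchain2 : ∀ m n : ℕ, 0 < m → m < n → d m + dist (x m) (x n) - b ≤ d n := by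
    intro m n hm hmn
    have h := hchain 2 ![0, m, n] (by
      rw [Fin.strictMono_iff_lt_succ]
      intro i
      fin_cases i <;> simp [hm, hmn])
    simpa [Fin.sum_univ_two, Fin.last] using h
  -- the Cauchy estimate
  have hE : ∀ m n : ℕ, 0 < m → m < n → ∀ t : ℝ, 0 ≤ t → t ≤ d m → t ≤ d n →
      dist (g m t) (g n t) ≤ Real.sqrt (2 * t^2 * b / d m) := by
    intro m n hm hmn t ht0 htm htn
    obtain ⟨g2, h2geo, h2a, h2b, _⟩ :=
      exists_normal_geodesic hX.1 hconv (hxA m) (hxA n)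
    exact key_estimate hX hb (hgeo m) (hg0 m) (hg1 m) h2geo h2a h2b
      (hgeo n) (hg0 n) (hg1 n) (hchain2 m n hm hmn) ht0 htm htn
  -- d n is nonneg
  have hdnn : ∀ n, 0 ≤ d n := fun n => dist_nonneg
  set F : ℝ → ℕ → X := fun t n => g n (min t (d n)) with hF
  have hFA : ∀ t : ℝ, 0 ≤ t → ∀ n, F t n ∈ A := by
    intro t ht n
    exact hgA n _ ⟨le_min ht (hdnn n), min_le_right _ _⟩
  -- Cauchy
  have hcauchy : ∀ t : ℝ, 0 ≤ t → CauchySeq (F t) := by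
    intro t ht
    rw [Metric.cauchySeq_iff]
    intro ε hε
    set P : ℝ := max (max t 1) (2 * t^2 * b / ε^2 + 1) with hP
    have hP1 : (1:ℝ) ≤ P := le_trans (le_max_right t 1) (le_trans (le_max_left _ _) (le_refl P))
    have hPt : t ≤ P := le_trans (le_max_left t 1) (le_max_left _ _)
    have hP0 : (0:ℝ) < P := lt_of_lt_of_le one_pos hP1
    have hPb : 2 * t^2 * b < ε^2 * P := by
      have h1 : 2 * t^2 * b / ε^2 + 1 ≤ P := le_max_right _ _
      have h2 : 0 < ε^2 := by positivity
      have h3 : ε^2 * (2 * t^2 * b / ε^2) = 2 * t^2 * b := by field_simp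
      nlinarith [mul_le_mul_of_nonneg_left h1 h2.le]
    have hsmall : Real.sqrt (2 * t^2 * b / P) < ε := by
      rw [Real.sqrt_lt' hε]
      rw [div_lt_iff₀ hP0]
      linarith [hPb]
    obtain ⟨N₀, hN₀⟩ := Filter.eventually_atTop.mp (htend.eventually_ge_atTop P)
    refine ⟨max N₀ 1, ?_⟩
    have hcore : ∀ m n, max N₀ 1 ≤ m → max N₀ 1 ≤ n → m < n → dist (F t m) (F t n) < ε := by
      intro m n hm hn hmn
      have hdm : P ≤ d m := hN₀ m (le_trans (le_max_left _ _) hm)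
      have hdn : P ≤ d n := hN₀ n (le_trans (le_max_left _ _) hn)
      have hm1 : 0 < m := lt_of_lt_of_le one_pos (le_trans (le_max_right _ _) hm)
      have htm : t ≤ d m := le_trans hPt hdm
      have htn : t ≤ d n := le_trans hPt hdn
      have hFm : F t m = g m t := by rw [hF]; simp [min_eq_left htm]
      have hFn : F t n = g n t := by rw [hF]; simp [min_eq_left htn]
      rw [hFm, hFn]
      calc dist (g m t) (g n t) ≤ Real.sqrt (2 * t^2 * b / d m) :=
            hE m n hm1 hmn t ht htm htn
        _ ≤ Real.sqrt (2 * t^2 * b / P) := by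
            apply Real.sqrt_le_sqrt
            apply div_le_div_of_nonneg_left (by positivity) hP0 hdm
        _ < ε := hsmall
    intro m hm n hn
    rcases lt_trichotomy m n with h | h | h
    · exact hcore m n hm hn h
    · rw [h]; simpa using hε
    · rw [dist_comm]; exact hcore n m hn hm h
  -- the limit function
  have hlim : ∀ t : ℝ, 0 ≤ t → ∃ y : X, Filter.Tendsto (F t) Filter.atTop (nhds y) :=
    fun t ht => cauchySeq_tendsto_of_complete (hcauchy t ht)
  set γ : ℝ → X := fun t => if ht : 0 ≤ t then (hlim t ht).choose else x 0 with hγ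
  have hγt : ∀ t : ℝ, 0 ≤ t → Filter.Tendsto (F t) Filter.atTop (nhds (γ t)) := by
    intro t ht
    rw [hγ]
    simp only [dif_pos ht]
    exact (hlim t ht).choose_spec
  refine ⟨γ, ?_, ?_⟩
  · intro s hs t ht
    rw [Set.mem_Ici] at hs ht
    have h1 : Filter.Tendsto (fun n => dist (F s n) (F t n)) Filter.atTop
        (nhds (dist (γ s) (γ t))) := (hγt s hs).dist (hγt t ht)
    have h2 : ∀ᶠ n in Filter.atTop, dist (F s n) (F t n) = |s - t| := by
      obtain ⟨N₁, hN₁⟩ := Filter.eventually_atTop.mp (htend.eventually_ge_atTop (max s t))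
      filter_upwards [Filter.eventually_ge_atTop N₁] with n hn
      have hdn := hN₁ n hn
      have hsn : s ≤ d n := le_trans (le_max_left s t) hdn
      have htn : t ≤ d n := le_trans (le_max_right s t) hdn
      have hFs : F s n = g n s := by rw [hF]; simp [min_eq_left hsn]
      have hFt : F t n = g n t := by rw [hF]; simp [min_eq_left htn]
      rw [hFs, hFt]
      exact hgeo n s ⟨hs, hsn⟩ t ⟨ht, htn⟩
    have h3 : Filter.Tendsto (fun n => dist (F s n) (F t n)) Filter.atTop (nhds |s - t|) :=
      tendsto_const_nhds.congr' (h2.mono fun n h => h.symm)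
    exact tendsto_nhds_unique h1 h3
  · intro t ht
    rw [Set.mem_Ici] at ht
    exact hclosed.mem_of_tendsto (hγt t ht)
      (Filter.Eventually.of_forall (hFA t ht))
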